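/- arXiv:1008.3145 — 2 statements merged into one kernel-verified Lean document; each statement's English description precedes it below -/
import Mathlib

section
/- For any equivariant sheaf (r : R → X_T, ρ) on the topological groupoid G_T ⇉ X_T and any point x₀ ∈ R, there exist an L-formula φ with n free variables, a tuple a⃗ ∈ αⁿ, and a continuous section v : ⟨φ, a⃗⟩ → R of r (i.e. r(v(M)) = M for all M ∈ ⟨φ, a⃗⟩) with x₀ in the image of v, such that for every (M,N,f) ∈ G_T with M ∈ ⟨φ, a⃗⟩ and f(aᵢ) = aᵢ for all i (so that also N ∈ ⟨φ, a⃗⟩), one has ρ((M,N,f), v(M)) = v(N). -/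
open FirstOrder FirstOrder.Language Set Topology

universe u v w x

variable {L : FirstOrder.Language.{u, v}} {α : Type w}

/-- A model of `T` whose carrier is a subset of `α`: an element of the set `X_T` of
small models of `T`. -/
structure SmallModel (L : FirstOrder.Language.{u, v}) (α : Type w) (T : L.Theory) where
  carrier : Set α
  struc : L.Structure carrier
  models : @FirstOrder.Language.Theory.Model L carrier struc T

/-- `M.Sat φ v` means that the formula `φ` is realized in the small model `M`
at the valuation `v`. -/
def SmallModel.Sat {T : L.Theory} (M : SmallModel L α T) {ι : Type*}
    (φ : L.Formula ι) (v : ι → M.carrier) : Prop :=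
  letI := M.struc
  φ.Realize v

/-- The basic open set `⟨φ, b⟩ ⊆ X_T`. -/
def XBasic {T : L.Theory} {n : ℕ} (φ : L.Formula (Fin n)) (b : Fin n → α) :
    Set (SmallModel L α T) :=
  {M | ∃ h : ∀ i, b i ∈ M.carrier, M.Sat φ fun i => ⟨b i, h i⟩}

/-- The logical topology on `X_T`, generated by the sets `⟨φ, b⟩`. -/
instance SmallModel.instTopologicalSpace {T : L.Theory} :
    TopologicalSpace (SmallModel L α T) :=
  TopologicalSpace.generateFrom
    {U | ∃ (n : ℕ) (φ : L.Formula (Fin n)) (b : Fin n → α), U = XBasic φ b}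

/-- Isomorphisms of `L`-structures between two small models. -/
abbrev StrEquiv {T : L.Theory} (A B : SmallModel L α T) : Type _ :=
  @FirstOrder.Language.Equiv L A.carrier B.carrier A.struc B.struc

/-- The underlying function of an isomorphism of small models. -/
def StrEquiv.fn {T : L.Theory} {A B : SmallModel L α T} (f : StrEquiv A B) :
    A.carrier → B.carrier :=
  (@FirstOrder.Language.Equiv.toEquiv L A.carrier B.carrier A.struc B.struc f)

/-- Composition of isomorphisms of small models. -/
def StrEquiv.comp {T : L.Theory} {A B C : SmallModel L α T}
    (g : StrEquiv B C) (f : StrEquiv A B) : StrEquiv A C :=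
  letI := A.struc; letI := B.struc; letI := C.struc
  FirstOrder.Language.Equiv.comp g f

/-- An element of `G_T`: a triple `(M, N, f)` with `M, N ∈ X_T` and `f : M ≅ N` an
isomorphism of `L`-structures. -/
structure ModelIso (L : FirstOrder.Language.{u, v}) (α : Type w) (T : L.Theory) where
  src : SmallModel L α T
  tgt : SmallModel L α T
  iso : StrEquiv src tgt

/-- The basic open set `⟨a ↦ b⟩ ⊆ G_T`. -/
def GMapsTo {T : L.Theory} (a b : α) : Set (ModelIso L α T) :=
  {g | ∃ h : a ∈ g.src.carrier, (StrEquiv.fn g.iso ⟨a, h⟩ : α) = b}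

/-- The logical topology on `G_T`, generated by the sets `s⁻¹⟨φ, b⟩`, `t⁻¹⟨φ, b⟩` and
`⟨a ↦ b⟩`. -/
instance ModelIso.instTopologicalSpace {T : L.Theory} :
    TopologicalSpace (ModelIso L α T) :=
  TopologicalSpace.generateFrom
    ({U | ∃ (n : ℕ) (φ : L.Formula (Fin n)) (b : Fin n → α),
        U = ModelIso.src ⁻¹' XBasic φ b} ∪
     {U | ∃ (n : ℕ) (φ : L.Formula (Fin n)) (b : Fin n → α),
        U = ModelIso.tgt ⁻¹' XBasic φ b} ∪
     {U | ∃ a b : α, U = GMapsTo (T := T) a b})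

/-- The identity arrow of `G_T` at a model `M`. -/
def ModelIso.idIso {T : L.Theory} (M : SmallModel L α T) : ModelIso L α T :=
  ⟨M, M, letI := M.struc; FirstOrder.Language.Equiv.refl L M.carrier⟩

/-- The inverse of an arrow of `G_T`. -/
def ModelIso.invIso {T : L.Theory} (g : ModelIso L α T) : ModelIso L α T :=
  ⟨g.tgt, g.src, letI := g.src.struc; letI := g.tgt.struc;
    FirstOrder.Language.Equiv.symm g.iso⟩

/-- An equivariant sheaf `(r : R → X_T, ρ)` on the topological groupoid `G_T ⇉ X_T`:
a local homeomorphism `r` into `X_T` together with a continuous action `ρ` of `G_T`. -/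
structure EquivSheaf (L : FirstOrder.Language.{u, v}) (α : Type w) (T : L.Theory) where
  /-- The total space. -/
  R : Type x
  [topR : TopologicalSpace R]
  /-- The projection to the space of models. -/
  r : R → SmallModel L α T
  isLocalHomeomorph_r : IsLocalHomeomorph r
  /-- The action `ρ : G_T ×_{X_T} R → R`, defined on the set of pairs `((M,N,f), z)`
  with `r z = M`, topologized as a subspace of the product. -/
  act : {q : ModelIso L α T × R // r q.2 = q.1.src} → R
  continuous_act : Continuous act
  r_act : ∀ q, r (act q) = q.1.1.tgt
  act_id : ∀ z : R, act ⟨(ModelIso.idIso (r z), z), rfl⟩ = z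
  act_comp : ∀ (A B C : SmallModel L α T) (f : StrEquiv A B) (g : StrEquiv B C)
      (z : R) (hz : r z = A),
    act ⟨((⟨B, C, g⟩ : ModelIso L α T),
          act ⟨((⟨A, B, f⟩ : ModelIso L α T), z), hz⟩), r_act _⟩ =
      act ⟨((⟨A, C, StrEquiv.comp g f⟩ : ModelIso L α T), z), hz⟩

attribute [instance] EquivSheaf.topR

section Aux

variable {T : L.Theory}

lemma XBasic_inter {m n : ℕ} (φ : L.Formula (Fin m)) (a : Fin m → α)
    (ψ : L.Formula (Fin n)) (b : Fin n → α) :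
    XBasic (T := T) (φ.relabel (Fin.castAdd n) ⊓ ψ.relabel (Fin.natAdd m)) (Fin.append a b)
      = XBasic φ a ∩ XBasic ψ b := by
  ext M
  letI := M.struc
  simp only [XBasic, SmallModel.Sat, Set.mem_setOf_eq, Set.mem_inter_iff,
    Formula.realize_inf, Formula.realize_relabel]
  constructor
  · rintro ⟨h, h1, h2⟩
    have ha : ∀ i, a i ∈ M.carrier := fun i => by
      have := h (Fin.castAdd n i); rwa [Fin.append_left] at this
    have hb : ∀ i, b i ∈ M.carrier := fun i => by
      have := h (Fin.natAdd m i); rwa [Fin.append_right] at this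
    refine ⟨⟨ha, ?_⟩, ⟨hb, ?_⟩⟩
    · have he : ((fun i => (⟨Fin.append a b i, h i⟩ : M.carrier)) ∘ Fin.castAdd n)
          = fun i => ⟨a i, ha i⟩ := funext fun i => Subtype.ext (Fin.append_left a b i)
      rw [he] at h1; exact h1
    · have he : ((fun i => (⟨Fin.append a b i, h i⟩ : M.carrier)) ∘ Fin.natAdd m)
          = fun i => ⟨b i, hb i⟩ := funext fun i => Subtype.ext (Fin.append_right a b i)
      rw [he] at h2; exact h2
  · rintro ⟨⟨ha, h1⟩, ⟨hb, h2⟩⟩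
    have h : ∀ i, Fin.append a b i ∈ M.carrier := fun i => by
      refine Fin.addCases (motive := fun i => Fin.append a b i ∈ M.carrier)
        (fun j => ?_) (fun j => ?_) i
      · simp only [Fin.append_left]; exact ha j
      · simp only [Fin.append_right]; exact hb j
    refine ⟨h, ?_, ?_⟩
    · have he : ((fun i => (⟨Fin.append a b i, h i⟩ : M.carrier)) ∘ Fin.castAdd n)
          = fun i => ⟨a i, ha i⟩ := funext fun i => Subtype.ext (Fin.append_left a b i)
      rw [he]; exact h1
    · have he : ((fun i => (⟨Fin.append a b i, h i⟩ : M.carrier)) ∘ Fin.natAdd m)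
          = fun i => ⟨b i, hb i⟩ := funext fun i => Subtype.ext (Fin.append_right a b i)
      rw [he]; exact h2

lemma XBasic_top {k : ℕ} (c : Fin k → α) :
    XBasic (T := T) (⊤ : L.Formula (Fin k)) c = {M | ∀ i, c i ∈ M.carrier} := by
  ext M
  letI := M.struc
  simp [XBasic, SmallModel.Sat]

lemma XBasic_univ :
    XBasic (T := T) (⊤ : L.Formula (Fin 0)) (fun i => i.elim0)
      = (Set.univ : Set (SmallModel L α T)) := by
  rw [XBasic_top]
  simp

/-- The generating family for the topology on `X_T`. -/
def XSub (T : L.Theory) : Set (Set (SmallModel L α T)) :=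
  {U | ∃ (n : ℕ) (φ : L.Formula (Fin n)) (b : Fin n → α), U = XBasic φ b}

lemma sInter_xbasic {f : Set (Set (SmallModel L α T))} (hfin : f.Finite)
    (hsub : f ⊆ XSub T) :
    ∃ (n : ℕ) (φ : L.Formula (Fin n)) (a : Fin n → α), ⋂₀ f = XBasic (T := T) φ a := by
  revert hsub
  refine Set.Finite.induction_on f hfin ?_ ?_
  · intro _
    exact ⟨0, ⊤, fun i => i.elim0, by rw [Set.sInter_empty, XBasic_univ]⟩
  · rintro U f hU hfin ih hsub
    obtain ⟨n, φ, a, hfa⟩ := ih fun x hx => hsub (Set.mem_insert_of_mem _ hx)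
    obtain ⟨m, ψ, b, rfl⟩ := hsub (Set.mem_insert _ _)
    exact ⟨m + n, ψ.relabel (Fin.castAdd n) ⊓ φ.relabel (Fin.natAdd m), Fin.append b a,
      by rw [Set.sInter_insert, hfa, XBasic_inter]⟩

lemma exists_xbasic_subset {V : Set (SmallModel L α T)} (hV : IsOpen V)
    {M : SmallModel L α T} (hM : M ∈ V) :
    ∃ (n : ℕ) (φ : L.Formula (Fin n)) (a : Fin n → α),
      M ∈ XBasic (T := T) φ a ∧ XBasic (T := T) φ a ⊆ V := by
  have hb := TopologicalSpace.isTopologicalBasis_of_subbasis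
    (s := XSub (α := α) T) rfl
  obtain ⟨_, ⟨f, ⟨hfin, hsub⟩, rfl⟩, hMf, hfV⟩ := hb.exists_subset_of_mem_open hM hV
  obtain ⟨n, φ, a, h⟩ := sInter_xbasic hfin hsub
  exact ⟨n, φ, a, h ▸ hMf, h ▸ hfV⟩

/-- The generating family for the topology on `G_T`. -/
def GSub (T : L.Theory) : Set (Set (ModelIso L α T)) :=
  ({U | ∃ (n : ℕ) (φ : L.Formula (Fin n)) (b : Fin n → α),
      U = ModelIso.src ⁻¹' XBasic φ b} ∪
   {U | ∃ (n : ℕ) (φ : L.Formula (Fin n)) (b : Fin n → α),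
      U = ModelIso.tgt ⁻¹' XBasic φ b} ∪
   {U | ∃ a b : α, U = GMapsTo (T := T) a b})

lemma continuous_src : Continuous (ModelIso.src : ModelIso L α T → SmallModel L α T) :=
  continuous_generateFrom_iff.mpr fun s hs => by
    obtain ⟨n, φ, b, rfl⟩ := hs
    exact TopologicalSpace.isOpen_generateFrom_of_mem (Or.inl (Or.inl ⟨n, φ, b, rfl⟩))

lemma sInter_gbasic {f : Set (Set (ModelIso L α T))} (hfin : f.Finite)
    (hsub : f ⊆ GSub T) :
    ∃ (m₁ : ℕ) (ψ₁ : L.Formula (Fin m₁)) (b₁ : Fin m₁ → α)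
      (m₂ : ℕ) (ψ₂ : L.Formula (Fin m₂)) (b₂ : Fin m₂ → α)
      (k : ℕ) (c d : Fin k → α),
      ⋂₀ f = ModelIso.src ⁻¹' XBasic (T := T) ψ₁ b₁ ∩
        ModelIso.tgt ⁻¹' XBasic (T := T) ψ₂ b₂ ∩ ⋂ j, GMapsTo (c j) (d j) := by
  revert hsub
  refine Set.Finite.induction_on f hfin ?_ ?_
  · intro _
    refine ⟨0, ⊤, fun i => i.elim0, 0, ⊤, fun i => i.elim0, 0, fun i => i.elim0,
      fun i => i.elim0, ?_⟩
    rw [Set.sInter_empty, XBasic_univ]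
    simp
  · rintro U f hU hfin ih hsub
    obtain ⟨m₁, ψ₁, b₁, m₂, ψ₂, b₂, k, c, d, hfa⟩ :=
      ih fun x hx => hsub (Set.mem_insert_of_mem _ hx)
    rcases hsub (Set.mem_insert _ _) with (⟨n, φ, b, rfl⟩ | ⟨n, φ, b, rfl⟩) | ⟨a, b, rfl⟩
    · refine ⟨n + m₁, φ.relabel (Fin.castAdd m₁) ⊓ ψ₁.relabel (Fin.natAdd n),
        Fin.append b b₁, m₂, ψ₂, b₂, k, c, d, ?_⟩
      rw [Set.sInter_insert, hfa, XBasic_inter, Set.preimage_inter]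
      ext x
      simp only [Set.mem_inter_iff]
      tauto
    · refine ⟨m₁, ψ₁, b₁, n + m₂, φ.relabel (Fin.castAdd m₂) ⊓ ψ₂.relabel (Fin.natAdd n),
        Fin.append b b₂, k, c, d, ?_⟩
      rw [Set.sInter_insert, hfa, XBasic_inter, Set.preimage_inter]
      ext x
      simp only [Set.mem_inter_iff]
      tauto
    · refine ⟨m₁, ψ₁, b₁, m₂, ψ₂, b₂, k + 1, Fin.cons a c, Fin.cons b d, ?_⟩
      rw [Set.sInter_insert, hfa]
      ext x
      simp only [Set.mem_inter_iff, Set.mem_iInter, Fin.forall_fin_succ, Fin.cons_zero,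
        Fin.cons_succ]
      tauto

lemma exists_gbasic_subset {W : Set (ModelIso L α T)} (hW : IsOpen W)
    {g : ModelIso L α T} (hg : g ∈ W) :
    ∃ (m₁ : ℕ) (ψ₁ : L.Formula (Fin m₁)) (b₁ : Fin m₁ → α)
      (m₂ : ℕ) (ψ₂ : L.Formula (Fin m₂)) (b₂ : Fin m₂ → α)
      (k : ℕ) (c d : Fin k → α),
      g ∈ ModelIso.src ⁻¹' XBasic (T := T) ψ₁ b₁ ∩
        ModelIso.tgt ⁻¹' XBasic (T := T) ψ₂ b₂ ∩ ⋂ j, GMapsTo (c j) (d j) ∧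
      ModelIso.src ⁻¹' XBasic (T := T) ψ₁ b₁ ∩
        ModelIso.tgt ⁻¹' XBasic (T := T) ψ₂ b₂ ∩ ⋂ j, GMapsTo (c j) (d j) ⊆ W := by
  have hb := TopologicalSpace.isTopologicalBasis_of_subbasis
    (s := GSub (α := α) T) rfl
  obtain ⟨_, ⟨f, ⟨hfin, hsub⟩, rfl⟩, hgf, hfW⟩ := hb.exists_subset_of_mem_open hg hW
  obtain ⟨m₁, ψ₁, b₁, m₂, ψ₂, b₂, k, c, d, h⟩ := sInter_gbasic hfin hsub
  exact ⟨m₁, ψ₁, b₁, m₂, ψ₂, b₂, k, c, d, h ▸ hgf, h ▸ hfW⟩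

end Aux

/-- **Well-behaved sections exist**: for any equivariant sheaf `(r : R → X_T, ρ)` on
`G_T ⇉ X_T` and any point `x₀ ∈ R`, there is a continuous section `v` of `r` over some
basic open `⟨φ, a⃗⟩ ⊆ X_T`, with `x₀` in its image, such that `ρ((M,N,f), v(M)) = v(N)`
for every isomorphism `f : M ≅ N` between models of `⟨φ, a⃗⟩` fixing all the `aᵢ`. -/
theorem exists_invariant_section {T : L.Theory} (E : EquivSheaf.{u, v, w, x} L α T)
    (x₀ : E.R) :
    ∃ (n : ℕ) (φ : L.Formula (Fin n)) (a : Fin n → α)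
      (v : ↥(XBasic (T := T) φ a) → E.R)
      (hsec : ∀ M : ↥(XBasic (T := T) φ a), E.r (v M) = ↑M),
      Continuous v ∧ (∃ M, v M = x₀) ∧
      ∀ (g : ModelIso L α T) (hM : g.src ∈ XBasic φ a) (hN : g.tgt ∈ XBasic φ a),
        (∀ (i : Fin n) (hi : a i ∈ g.src.carrier), (StrEquiv.fn g.iso ⟨a i, hi⟩ : α) = a i) →
        E.act ⟨(g, v ⟨g.src, hM⟩), hsec ⟨g.src, hM⟩⟩ = v ⟨g.tgt, hN⟩ := by
  classical
  obtain ⟨e, hx₀, hre⟩ := E.isLocalHomeomorph_r x₀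
  have hrM : ∀ {M : SmallModel L α T}, M ∈ e.target → E.r (e.symm M) = M := by
    intro M hM; rw [hre]; exact e.right_inv hM
  have hM₀t : E.r x₀ ∈ e.target := by rw [hre]; exact e.map_source hx₀
  obtain ⟨m, φ, a, hM₀φ, hφV⟩ := exists_xbasic_subset e.open_target hM₀t
  -- the candidate action map on the set of arrows with source in `⟨φ, a⟩`
  set D : Set (ModelIso L α T) := ModelIso.src ⁻¹' XBasic (T := T) φ a with hD
  have hsecφ : ∀ g : D, E.r (e.symm (g : ModelIso L α T).src) = (g : ModelIso L α T).src :=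
    fun g => hrM (hφV g.2)
  set F : D → E.R :=
    fun g => E.act ⟨((g : ModelIso L α T), e.symm (g : ModelIso L α T).src), hsecφ g⟩ with hF
  have hFcont : Continuous F := by
    apply E.continuous_act.comp
    apply Continuous.subtype_mk
    refine continuous_subtype_val.prodMk ?_
    exact e.continuousOn_symm.comp_continuous (continuous_src.comp continuous_subtype_val)
      fun g => hφV g.2
  have hWopen : IsOpen (F ⁻¹' e.source) := e.open_source.preimage hFcont
  obtain ⟨W', hW'open, hW'pre⟩ := isOpen_induced_iff.mp hWopen
  -- the identity arrow at `E.r x₀` lies in `F ⁻¹' e.source`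
  have hsymmM₀ : e.symm (E.r x₀) = x₀ := by rw [hre]; exact e.left_inv hx₀
  have hg₀D : ModelIso.idIso (E.r x₀) ∈ D := hM₀φ
  have hF₀ : F ⟨ModelIso.idIso (E.r x₀), hg₀D⟩ = x₀ := by
    have h1 : F ⟨ModelIso.idIso (E.r x₀), hg₀D⟩
        = E.act ⟨(ModelIso.idIso (E.r x₀), x₀), rfl⟩ :=
      congrArg E.act (Subtype.ext (Prod.ext rfl hsymmM₀))
    rw [h1, E.act_id]
  have hg₀W' : ModelIso.idIso (E.r x₀) ∈ W' := by
    have : (⟨ModelIso.idIso (E.r x₀), hg₀D⟩ : D) ∈ Subtype.val ⁻¹' W' := by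
      rw [hW'pre, Set.mem_preimage, hF₀]; exact hx₀
    exact this
  have hDopen : IsOpen D :=
    TopologicalSpace.isOpen_generateFrom_of_mem (Or.inl (Or.inl ⟨m, φ, a, rfl⟩))
  obtain ⟨m₁, ψ₁, b₁, m₂, ψ₂, b₂, k, c, d, hgN, hNW⟩ :=
    exists_gbasic_subset (hW'open.inter hDopen) (Set.mem_inter hg₀W' hg₀D)
  have hg₀s : E.r x₀ ∈ XBasic (T := T) ψ₁ b₁ := hgN.1.1
  have hg₀t : E.r x₀ ∈ XBasic (T := T) ψ₂ b₂ := hgN.1.2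
  have hcd : ∀ j, c j ∈ (E.r x₀).carrier ∧ c j = d j := by
    intro j
    obtain ⟨h1, h2⟩ := Set.mem_iInter.mp hgN.2 j
    exact ⟨h1, h2⟩
  -- the combined formula and tuple
  refine ⟨m + m₁ + m₂ + k,
    ((φ.relabel (Fin.castAdd m₁) ⊓ ψ₁.relabel (Fin.natAdd m)).relabel (Fin.castAdd m₂) ⊓
      ψ₂.relabel (Fin.natAdd (m + m₁))).relabel (Fin.castAdd k) ⊓
      (⊤ : L.Formula (Fin k)).relabel (Fin.natAdd (m + m₁ + m₂)),
    Fin.append (Fin.append (Fin.append a b₁) b₂) c, ?_⟩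
  have hXeq : XBasic (T := T)
      (((φ.relabel (Fin.castAdd m₁) ⊓ ψ₁.relabel (Fin.natAdd m)).relabel (Fin.castAdd m₂) ⊓
        ψ₂.relabel (Fin.natAdd (m + m₁))).relabel (Fin.castAdd k) ⊓
        (⊤ : L.Formula (Fin k)).relabel (Fin.natAdd (m + m₁ + m₂)))
      (Fin.append (Fin.append (Fin.append a b₁) b₂) c)
      = XBasic φ a ∩ XBasic ψ₁ b₁ ∩ XBasic ψ₂ b₂ ∩ {M | ∀ i, c i ∈ M.carrier} := by
    rw [XBasic_inter, XBasic_inter, XBasic_inter, XBasic_top]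
  set χ := (((φ.relabel (Fin.castAdd m₁) ⊓ ψ₁.relabel (Fin.natAdd m)).relabel
      (Fin.castAdd m₂) ⊓ ψ₂.relabel (Fin.natAdd (m + m₁))).relabel (Fin.castAdd k) ⊓
      (⊤ : L.Formula (Fin k)).relabel (Fin.natAdd (m + m₁ + m₂))) with hχ
  set aa := Fin.append (Fin.append (Fin.append a b₁) b₂) c with haa
  have hsub1 : XBasic (T := T) χ aa ⊆ XBasic φ a := by
    rw [hXeq]; intro M hM; exact hM.1.1.1
  -- the section
  refine ⟨fun M => e.symm ↑M, fun M => hrM (hφV (hsub1 M.2)), ?_, ?_, ?_⟩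
  · exact e.continuousOn_symm.comp_continuous continuous_subtype_val
      fun M => hφV (hsub1 M.2)
  · refine ⟨⟨E.r x₀, ?_⟩, hsymmM₀⟩
    rw [hXeq]
    exact ⟨⟨⟨hM₀φ, hg₀s⟩, hg₀t⟩, fun j => (hcd j).1⟩
  · intro g hM hN hfix
    have hM' := hM; rw [hXeq] at hM'
    have hN' := hN; rw [hXeq] at hN'
    have hs : g.src ∈ XBasic (T := T) φ a := hM'.1.1.1
    -- `g` lies in the basic neighbourhood of the identity
    have hgmem : g ∈ ModelIso.src ⁻¹' XBasic (T := T) ψ₁ b₁ ∩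
        ModelIso.tgt ⁻¹' XBasic (T := T) ψ₂ b₂ ∩ ⋂ j, GMapsTo (c j) (d j) := by
      refine ⟨⟨hM'.1.1.2, hN'.1.2⟩, Set.mem_iInter.mpr fun j => ?_⟩
      have hmem : c j ∈ g.src.carrier := hM'.2 j
      have haaj : aa (Fin.natAdd (m + m₁ + m₂) j) = c j := Fin.append_right _ _ j
      have hi : aa (Fin.natAdd (m + m₁ + m₂) j) ∈ g.src.carrier := by
        rw [haaj]; exact hmem
      refine ⟨hmem, ?_⟩
      have h2 : (⟨aa (Fin.natAdd (m + m₁ + m₂) j), hi⟩ : g.src.carrier)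
          = ⟨c j, hmem⟩ := Subtype.ext haaj
      calc (StrEquiv.fn g.iso ⟨c j, hmem⟩ : α)
          = (StrEquiv.fn g.iso ⟨aa (Fin.natAdd (m + m₁ + m₂) j), hi⟩ : α) := by rw [h2]
        _ = aa (Fin.natAdd (m + m₁ + m₂) j) := hfix _ hi
        _ = c j := haaj
        _ = d j := (hcd j).2
    have hgW' : g ∈ W' := (hNW hgmem).1
    have hFg : F ⟨g, hs⟩ ∈ e.source := by
      have : (⟨g, hs⟩ : D) ∈ Subtype.val ⁻¹' W' := hgW'
      rw [hW'pre] at this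
      exact this
    have hvt : e.symm g.tgt ∈ e.source := e.map_target (hφV (hsub1 hN))
    have hr1 : E.r (F ⟨g, hs⟩) = g.tgt := E.r_act _
    have hr2 : E.r (e.symm g.tgt) = g.tgt := hrM (hφV (hsub1 hN))
    have heq : (e : E.R → SmallModel L α T) (F ⟨g, hs⟩) = e (e.symm g.tgt) := by
      rw [← hre]; exact hr1.trans hr2.symm
    have hLF : E.act ⟨(g, e.symm (↑(⟨g.src, hM⟩ : XBasic (T := T) χ aa) :
        SmallModel L α T)), hrM (hφV (hsub1 hM))⟩ = F ⟨g, hs⟩ := rfl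
    exact hLF.trans (e.injOn hFg hvt heq)
end

section
/- For any equivariant sheaf (r : R → X_T, ρ) on the topological groupoid G_T ⇉ X_T and any point x₀ ∈ R, there exist an L-formula ξ with n free variables and a continuous map v̂ : ⟦ξ⟧ → R over X_T (i.e. r ∘ v̂ = π₁) which is equivariant, meaning v̂(θ_ξ((M,N,f), p)) = ρ((M,N,f), v̂(p)) for every composable pair, and which has x₀ in its image. (Hence the definable equivariant sheaves generate: every equivariant sheaf is covered by morphisms from definable ones.) -/
open FirstOrder FirstOrder.Language Set Topology

universe u v w x

variable {L : FirstOrder.Language.{u, v}} {α : Type w}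

/-- A point of the sheaf `⟦φ⟧`: a model `M ∈ X_T` together with a tuple from its carrier
realizing `φ`. -/
structure SheafPt {L : FirstOrder.Language.{u, v}} {α : Type w} (T : L.Theory)
    {n : ℕ} (φ : L.Formula (Fin n)) where
  model : SmallModel L α T
  elem : Fin n → model.carrier
  sat : model.Sat φ elem

/-- The basic open set `⟨ψ, b⟩ ⊆ ⟦φ⟧`. -/
def sheafBasic {T : L.Theory} {n : ℕ} (φ : L.Formula (Fin n)) {m : ℕ}
    (ψ : L.Formula (Fin n ⊕ Fin m)) (b : Fin m → α) :
    Set (SheafPt (α := α) T φ) :=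
  {p | ∃ h : ∀ i, b i ∈ p.model.carrier,
        p.model.Sat ψ (Sum.elim p.elem fun i => ⟨b i, h i⟩)}

/-- The logical topology on `⟦φ⟧`, generated by the sets `⟨ψ, b⟩`. -/
instance SheafPt.instTopologicalSpace {T : L.Theory} {n : ℕ} (φ : L.Formula (Fin n)) :
    TopologicalSpace (SheafPt (α := α) T φ) :=
  TopologicalSpace.generateFrom
    {U | ∃ (m : ℕ) (ψ : L.Formula (Fin n ⊕ Fin m)) (b : Fin m → α), U = sheafBasic φ ψ b}

/-- An element of `G_T ×_{X_T} ⟦φ⟧`: an arrow `(M,N,f)` of `G_T` together with a point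
`(M, a⃗)` of `⟦φ⟧` lying over its source. -/
structure ActionPt {L : FirstOrder.Language.{u, v}} {α : Type w} (T : L.Theory)
    {n : ℕ} (φ : L.Formula (Fin n)) where
  g : ModelIso L α T
  elem : Fin n → g.src.carrier
  sat : g.src.Sat φ elem

/-- The point of `⟦φ⟧` over the source of the arrow. -/
def ActionPt.pt {T : L.Theory} {n : ℕ} {φ : L.Formula (Fin n)}
    (q : ActionPt (α := α) T φ) : SheafPt (α := α) T φ :=
  ⟨q.g.src, q.elem, q.sat⟩

/-- `G_T ×_{X_T} ⟦φ⟧` is topologized as a subspace of the product `G_T × ⟦φ⟧`. -/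
instance ActionPt.instTopologicalSpace {T : L.Theory} {n : ℕ} {φ : L.Formula (Fin n)} :
    TopologicalSpace (ActionPt (α := α) T φ) :=
  TopologicalSpace.induced (fun q => (q.g, q.pt)) inferInstance

/-- The action `θ_φ : G_T ×_{X_T} ⟦φ⟧ → ⟦φ⟧`, `θ_φ((M,N,f), (M, a⃗)) = (N, f(a⃗))`. -/
def theta {T : L.Theory} {n : ℕ} (φ : L.Formula (Fin n))
    (q : ActionPt (α := α) T φ) : SheafPt (α := α) T φ where
  model := q.g.tgt
  elem := fun i => StrEquiv.fn q.g.iso (q.elem i)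
  sat := by
    letI := q.g.src.struc
    letI := q.g.tgt.struc
    have h := q.sat
    have heq : (fun i => StrEquiv.fn q.g.iso (q.elem i)) = ⇑q.g.iso ∘ q.elem := rfl
    show Formula.Realize (M := q.g.tgt.carrier) φ _
    rw [heq]
    exact (StrongHomClass.realize_formula q.g.iso φ).mpr h

section Aux

open TopologicalSpace

variable {T : L.Theory}

/-! ### Satisfaction lemmas -/

theorem SmallModel.sat_inf {M : SmallModel L α T} {ι : Type*} {φ ψ : L.Formula ι}
    {v : ι → M.carrier} : M.Sat (φ ⊓ ψ) v ↔ M.Sat φ v ∧ M.Sat ψ v := by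
  letI := M.struc; exact Formula.realize_inf

theorem SmallModel.sat_top {M : SmallModel L α T} {ι : Type*} {v : ι → M.carrier} :
    M.Sat (⊤ : L.Formula ι) v := by
  letI := M.struc; exact Formula.realize_top.mpr trivial

theorem SmallModel.sat_relabel {M : SmallModel L α T} {ι κ : Type*} {φ : L.Formula ι}
    {g : ι → κ} {v : κ → M.carrier} : M.Sat (φ.relabel g) v ↔ M.Sat φ (v ∘ g) := by
  letI := M.struc; exact Formula.realize_relabel

theorem SmallModel.sat_not {M : SmallModel L α T} {ι : Type*} {φ : L.Formula ι}
    {v : ι → M.carrier} : M.Sat φ.not v ↔ ¬ M.Sat φ v := by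
  letI := M.struc; exact Formula.realize_not

theorem SmallModel.sat_equal {M : SmallModel L α T} {ι : Type*} {i j : ι}
    {v : ι → M.carrier} :
    M.Sat (Term.equal (L := L) (Term.var i) (Term.var j)) v ↔ v i = v j := by
  letI := M.struc
  exact Formula.realize_equal

theorem SmallModel.sat_congr {M : SmallModel L α T} {ι : Type*} {φ : L.Formula ι}
    {v w : ι → M.carrier} (h : ∀ i, (v i : α) = w i) : M.Sat φ v ↔ M.Sat φ w := by
  have : v = w := funext fun i => Subtype.ext (h i)
  rw [this]

theorem SmallModel.sat_iso {A B : SmallModel L α T} (f : StrEquiv A B) {ι : Type*}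
    (φ : L.Formula ι) (v : ι → A.carrier) :
    A.Sat φ v ↔ B.Sat φ (fun i => StrEquiv.fn f (v i)) := by
  letI := A.struc; letI := B.struc
  exact (StrongHomClass.realize_formula f φ).symm

/-! ### Generalized basic sets in `X_T` -/

/-- `XBasic` with an arbitrary index type. -/
def XB {T : L.Theory} {ι : Type*} (φ : L.Formula ι) (b : ι → α) : Set (SmallModel L α T) :=
  {M | ∃ h : ∀ i, b i ∈ M.carrier, M.Sat φ fun i => ⟨b i, h i⟩}

theorem XBasic_eq_XB {n : ℕ} (φ : L.Formula (Fin n)) (b : Fin n → α) :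
    XBasic (T := T) φ b = XB φ b := rfl

theorem mem_XB {ι : Type*} {φ : L.Formula ι} {b : ι → α} {M : SmallModel L α T} :
    M ∈ XB (T := T) φ b ↔ ∃ h : ∀ i, b i ∈ M.carrier, M.Sat φ fun i => ⟨b i, h i⟩ :=
  Iff.rfl

theorem XB_reindex {ι κ : Type*} (e : ι ≃ κ) (φ : L.Formula ι) (b : ι → α) :
    XB (T := T) (φ.relabel e) (b ∘ e.symm) = XB φ b := by
  ext M
  simp only [mem_XB, SmallModel.sat_relabel]
  constructor
  · rintro ⟨h, hs⟩
    refine ⟨fun i => by simpa using h (e i), ?_⟩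
    refine ((SmallModel.sat_congr fun i => ?_).mp hs)
    simp [Function.comp]
  · rintro ⟨h, hs⟩
    refine ⟨fun k => by simpa using h (e.symm k), ?_⟩
    refine ((SmallModel.sat_congr fun i => ?_).mpr hs)
    simp [Function.comp]

theorem XB_inter {ι κ : Type*} (φ : L.Formula ι) (b : ι → α) (ψ : L.Formula κ) (c : κ → α) :
    XB (T := T) φ b ∩ XB ψ c =
      XB (φ.relabel Sum.inl ⊓ ψ.relabel Sum.inr) (Sum.elim b c) := by
  ext M
  simp only [mem_inter_iff, mem_XB, SmallModel.sat_inf, SmallModel.sat_relabel]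
  constructor
  · rintro ⟨⟨h₁, s₁⟩, ⟨h₂, s₂⟩⟩
    refine ⟨fun i => by cases i with
      | inl i => exact h₁ i
      | inr i => exact h₂ i, ?_, ?_⟩
    · exact (SmallModel.sat_congr fun i => rfl).mp s₁
    · exact (SmallModel.sat_congr fun i => rfl).mp s₂
  · rintro ⟨h, s₁, s₂⟩
    exact ⟨⟨fun i => h (Sum.inl i), (SmallModel.sat_congr fun i => rfl).mp s₁⟩,
      ⟨fun i => h (Sum.inr i), (SmallModel.sat_congr fun i => rfl).mp s₂⟩⟩

theorem XB_top_eq_univ : XB (T := T) (⊤ : L.Formula (Fin 0)) Fin.elim0 = (univ : Set (SmallModel L α T)) := by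
  refine eq_univ_of_forall fun M => ⟨fun i => i.elim0, SmallModel.sat_top⟩

/-- The property of being a basic open of `X_T`. -/
def IsXBasic (S : Set (SmallModel L α T)) : Prop :=
  ∃ (n : ℕ) (φ : L.Formula (Fin n)) (b : Fin n → α), S = XBasic φ b

theorem isXBasic_XB {ι : Type*} [Fintype ι] (φ : L.Formula ι) (b : ι → α) :
    IsXBasic (XB (T := T) φ b) := by
  refine ⟨Fintype.card ι, φ.relabel (Fintype.equivFin ι), b ∘ (Fintype.equivFin ι).symm, ?_⟩
  rw [XBasic_eq_XB, XB_reindex]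

theorem IsXBasic.inter {S₁ S₂ : Set (SmallModel L α T)} (h₁ : IsXBasic S₁)
    (h₂ : IsXBasic S₂) : IsXBasic (S₁ ∩ S₂) := by
  obtain ⟨n₁, φ₁, b₁, rfl⟩ := h₁
  obtain ⟨n₂, φ₂, b₂, rfl⟩ := h₂
  rw [XBasic_eq_XB, XBasic_eq_XB, XB_inter]
  exact isXBasic_XB _ _

theorem IsXBasic.univ : IsXBasic (univ : Set (SmallModel L α T)) := by
  rw [← XB_top_eq_univ]; exact isXBasic_XB _ _

/-! ### Extracting basic neighbourhoods from a generated topology -/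

theorem gen_basic {X : Type*} {S : Set (Set X)} {B : Set (Set X)} (hS : S ⊆ B)
    (huniv : univ ∈ B) (hint : ∀ u ∈ B, ∀ v ∈ B, u ∩ v ∈ B) {u : Set X}
    (hu : TopologicalSpace.GenerateOpen S u) : ∀ x ∈ u, ∃ t ∈ B, x ∈ t ∧ t ⊆ u := by
  induction hu with
  | basic s hs => exact fun x hx => ⟨s, hS hs, hx, subset_rfl⟩
  | univ => exact fun x _ => ⟨univ, huniv, trivial, subset_rfl⟩
  | inter u v _ _ ihu ihv =>
    intro x hx
    obtain ⟨t₁, hb₁, hx₁, hs₁⟩ := ihu x hx.1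
    obtain ⟨t₂, hb₂, hx₂, hs₂⟩ := ihv x hx.2
    exact ⟨t₁ ∩ t₂, hint _ hb₁ _ hb₂, ⟨hx₁, hx₂⟩, inter_subset_inter hs₁ hs₂⟩
  | sUnion s _ ih =>
    rintro x ⟨u, hu, hxu⟩
    obtain ⟨t, hb, hxt, hst⟩ := ih u hu x hxu
    exact ⟨t, hb, hxt, hst.trans (subset_sUnion_of_mem hu)⟩

theorem exists_xbasic_subset_s15 {u : Set (SmallModel L α T)} (hu : IsOpen u)
    {M : SmallModel L α T} (hM : M ∈ u) : ∃ t, IsXBasic t ∧ M ∈ t ∧ t ⊆ u := by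
  have hgen : TopologicalSpace.GenerateOpen
      {U | ∃ (n : ℕ) (φ : L.Formula (Fin n)) (b : Fin n → α), U = XBasic (T := T) φ b} u := hu
  obtain ⟨t, ht, h1, h2⟩ := gen_basic (B := {S | IsXBasic S}) (fun s hs => hs)
    IsXBasic.univ (fun u hu v hv => hu.inter hv) hgen M hM
  exact ⟨t, ht, h1, h2⟩

theorem IsXBasic.isOpen {S : Set (SmallModel L α T)} (h : IsXBasic S) : IsOpen S :=
  TopologicalSpace.GenerateOpen.basic _ h

end Aux


section AuxG

variable {T : L.Theory}

/-! ### Generalized basic sets in `G_T` -/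

/-- Generalized basic open of `G_T`. -/
def GB {T : L.Theory} {ι κ μ : Type*} (φ : L.Formula ι) (b : ι → α) (ψ : L.Formula κ)
    (c : κ → α) (s t : μ → α) : Set (ModelIso L α T) :=
  {g | g.src ∈ XB φ b ∧ g.tgt ∈ XB ψ c ∧
    ∀ i, ∃ h : s i ∈ g.src.carrier, (StrEquiv.fn g.iso ⟨s i, h⟩ : α) = t i}

theorem mem_GB {ι κ μ : Type*} {φ : L.Formula ι} {b : ι → α} {ψ : L.Formula κ}
    {c : κ → α} {s t : μ → α} {g : ModelIso L α T} :
    g ∈ GB φ b ψ c s t ↔ g.src ∈ XB φ b ∧ g.tgt ∈ XB ψ c ∧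
      ∀ i, ∃ h : s i ∈ g.src.carrier, (StrEquiv.fn g.iso ⟨s i, h⟩ : α) = t i := Iff.rfl

/-- The property of being a (Fin-indexed) basic open of `G_T`. -/
def IsGBasic (S : Set (ModelIso L α T)) : Prop :=
  ∃ (n₁ n₂ k : ℕ) (φ : L.Formula (Fin n₁)) (b : Fin n₁ → α) (ψ : L.Formula (Fin n₂))
    (c : Fin n₂ → α) (s t : Fin k → α), S = GB φ b ψ c s t

theorem GB_reindex {ι ι' κ κ' μ μ' : Type*} (e₁ : ι ≃ ι') (e₂ : κ ≃ κ') (e₃ : μ ≃ μ')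
    (φ : L.Formula ι) (b : ι → α) (ψ : L.Formula κ) (c : κ → α) (s t : μ → α) :
    GB (T := T) (φ.relabel e₁) (b ∘ e₁.symm) (ψ.relabel e₂) (c ∘ e₂.symm)
      (s ∘ e₃.symm) (t ∘ e₃.symm) = GB φ b ψ c s t := by
  ext g
  simp only [mem_GB, XB_reindex]
  refine and_congr Iff.rfl (and_congr Iff.rfl ?_)
  constructor
  · intro h i
    simpa using h (e₃ i)
  · intro h i
    simpa using h (e₃.symm i)

theorem isGBasic_GB {ι κ μ : Type*} [Fintype ι] [Fintype κ] [Fintype μ]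
    (φ : L.Formula ι) (b : ι → α) (ψ : L.Formula κ) (c : κ → α) (s t : μ → α) :
    IsGBasic (GB (T := T) φ b ψ c s t) :=
  ⟨_, _, _, φ.relabel (Fintype.equivFin ι), b ∘ (Fintype.equivFin ι).symm,
    ψ.relabel (Fintype.equivFin κ), c ∘ (Fintype.equivFin κ).symm,
    s ∘ (Fintype.equivFin μ).symm, t ∘ (Fintype.equivFin μ).symm,
    (GB_reindex _ _ _ _ _ _ _ _ _).symm⟩

theorem GB_inter {ι₁ κ₁ μ₁ ι₂ κ₂ μ₂ : Type*} (φ₁ : L.Formula ι₁) (b₁ : ι₁ → α)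
    (ψ₁ : L.Formula κ₁) (c₁ : κ₁ → α) (s₁ t₁ : μ₁ → α) (φ₂ : L.Formula ι₂) (b₂ : ι₂ → α)
    (ψ₂ : L.Formula κ₂) (c₂ : κ₂ → α) (s₂ t₂ : μ₂ → α) :
    GB (T := T) φ₁ b₁ ψ₁ c₁ s₁ t₁ ∩ GB φ₂ b₂ ψ₂ c₂ s₂ t₂ =
      GB (φ₁.relabel Sum.inl ⊓ φ₂.relabel Sum.inr) (Sum.elim b₁ b₂)
        (ψ₁.relabel Sum.inl ⊓ ψ₂.relabel Sum.inr) (Sum.elim c₁ c₂)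
        (Sum.elim s₁ s₂) (Sum.elim t₁ t₂) := by
  ext g
  simp only [mem_inter_iff, mem_GB, ← XB_inter, mem_inter_iff, Sum.forall]
  tauto

theorem IsGBasic.inter {S₁ S₂ : Set (ModelIso L α T)} (h₁ : IsGBasic S₁)
    (h₂ : IsGBasic S₂) : IsGBasic (S₁ ∩ S₂) := by
  obtain ⟨n₁, n₂, k, φ, b, ψ, c, s, t, rfl⟩ := h₁
  obtain ⟨m₁, m₂, l, φ', b', ψ', c', s', t', rfl⟩ := h₂
  rw [GB_inter]
  exact isGBasic_GB _ _ _ _ _ _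

theorem IsGBasic.univ : IsGBasic (Set.univ : Set (ModelIso L α T)) := by
  have : (Set.univ : Set (ModelIso L α T)) =
      GB (⊤ : L.Formula (Fin 0)) Fin.elim0 (⊤ : L.Formula (Fin 0)) Fin.elim0
        (Fin.elim0 : Fin 0 → α) Fin.elim0 := by
    refine (eq_univ_of_forall fun g => ?_).symm
    exact ⟨⟨fun i => i.elim0, SmallModel.sat_top⟩, ⟨fun i => i.elim0, SmallModel.sat_top⟩,
      fun i => i.elim0⟩
  rw [this]
  exact isGBasic_GB _ _ _ _ _ _

theorem isGBasic_src_preimage {n : ℕ} (φ : L.Formula (Fin n)) (b : Fin n → α) :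
    IsGBasic (ModelIso.src ⁻¹' XBasic (T := T) φ b) := by
  have : ModelIso.src ⁻¹' XBasic (T := T) φ b =
      GB φ b (⊤ : L.Formula (Fin 0)) Fin.elim0 (Fin.elim0 : Fin 0 → α) Fin.elim0 := by
    ext g
    simp only [mem_preimage, mem_GB, XBasic_eq_XB]
    exact ⟨fun h => ⟨h, ⟨fun i => i.elim0, SmallModel.sat_top⟩, fun i => i.elim0⟩,
      fun h => h.1⟩
  rw [this]; exact isGBasic_GB _ _ _ _ _ _

theorem isGBasic_tgt_preimage {n : ℕ} (φ : L.Formula (Fin n)) (b : Fin n → α) :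
    IsGBasic (ModelIso.tgt ⁻¹' XBasic (T := T) φ b) := by
  have : ModelIso.tgt ⁻¹' XBasic (T := T) φ b =
      GB (⊤ : L.Formula (Fin 0)) Fin.elim0 φ b (Fin.elim0 : Fin 0 → α) Fin.elim0 := by
    ext g
    simp only [mem_preimage, mem_GB, XBasic_eq_XB]
    exact ⟨fun h => ⟨⟨fun i => i.elim0, SmallModel.sat_top⟩, h, fun i => i.elim0⟩,
      fun h => h.2.1⟩
  rw [this]; exact isGBasic_GB _ _ _ _ _ _

theorem isGBasic_GMapsTo (a b : α) : IsGBasic (GMapsTo (T := T) a b) := by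
  have : GMapsTo (T := T) a b =
      GB (⊤ : L.Formula (Fin 0)) Fin.elim0 (⊤ : L.Formula (Fin 0)) Fin.elim0
        (fun _ : Fin 1 => a) (fun _ => b) := by
    ext g
    simp only [GMapsTo, mem_setOf_eq, mem_GB]
    constructor
    · rintro ⟨h, hh⟩
      exact ⟨⟨fun i => i.elim0, SmallModel.sat_top⟩, ⟨fun i => i.elim0, SmallModel.sat_top⟩,
        fun i => ⟨h, hh⟩⟩
    · rintro ⟨-, -, h⟩
      exact h 0
  rw [this]; exact isGBasic_GB _ _ _ _ _ _

theorem exists_gbasic_subset_s15 {u : Set (ModelIso L α T)} (hu : IsOpen u)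
    {g : ModelIso L α T} (hg : g ∈ u) : ∃ t, IsGBasic t ∧ g ∈ t ∧ t ⊆ u := by
  have hgen : TopologicalSpace.GenerateOpen
      ({U | ∃ (n : ℕ) (φ : L.Formula (Fin n)) (b : Fin n → α),
          U = ModelIso.src ⁻¹' XBasic (T := T) φ b} ∪
       {U | ∃ (n : ℕ) (φ : L.Formula (Fin n)) (b : Fin n → α),
          U = ModelIso.tgt ⁻¹' XBasic φ b} ∪
       {U | ∃ a b : α, U = GMapsTo (T := T) a b}) u := hu
  refine gen_basic (B := {S | IsGBasic S}) ?_ IsGBasic.univ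
    (fun u hu v hv => hu.inter hv) hgen g hg
  rintro S (hS | hS)
  · rcases hS with hS | hS
    · obtain ⟨n, φ, b, rfl⟩ := hS; exact isGBasic_src_preimage φ b
    · obtain ⟨n, φ, b, rfl⟩ := hS; exact isGBasic_tgt_preimage φ b
  · obtain ⟨a, b, rfl⟩ := hS; exact isGBasic_GMapsTo a b

end AuxG


section AuxC

variable {T : L.Theory}

/-! ### Generalized basic sets in `⟦φ⟧` -/

/-- `sheafBasic` with an arbitrary parameter index type. -/
def SB {T : L.Theory} {n : ℕ} (φ : L.Formula (Fin n)) {J : Type*}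
    (ψ : L.Formula (Fin n ⊕ J)) (b : J → α) : Set (SheafPt (α := α) T φ) :=
  {p | ∃ h : ∀ i, b i ∈ p.model.carrier,
        p.model.Sat ψ (Sum.elim p.elem fun i => ⟨b i, h i⟩)}

theorem mem_SB {n : ℕ} {φ : L.Formula (Fin n)} {J : Type*} {ψ : L.Formula (Fin n ⊕ J)}
    {b : J → α} {p : SheafPt (α := α) T φ} :
    p ∈ SB φ ψ b ↔ ∃ h : ∀ i, b i ∈ p.model.carrier,
      p.model.Sat ψ (Sum.elim p.elem fun i => ⟨b i, h i⟩) := Iff.rfl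

theorem SB_eq_sheafBasic {n : ℕ} (φ : L.Formula (Fin n)) {J : Type*} [Fintype J]
    (ψ : L.Formula (Fin n ⊕ J)) (b : J → α) :
    SB (T := T) φ ψ b = sheafBasic φ (ψ.relabel (Sum.map id (Fintype.equivFin J)))
      (b ∘ (Fintype.equivFin J).symm) := by
  set e := Fintype.equivFin J
  ext p
  simp only [mem_SB, sheafBasic, mem_setOf_eq, SmallModel.sat_relabel]
  constructor
  · rintro ⟨h, hs⟩
    refine ⟨fun i => h (e.symm i), ?_⟩
    refine (SmallModel.sat_congr (fun i => ?_)).mp hs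
    cases i with
    | inl i => rfl
    | inr j => simp [Function.comp]
  · rintro ⟨h, hs⟩
    refine ⟨fun j => by simpa using h (e j), ?_⟩
    refine (SmallModel.sat_congr (fun i => ?_)).mpr hs
    cases i with
    | inl i => rfl
    | inr j => simp [Function.comp]

theorem isOpen_SB {n : ℕ} (φ : L.Formula (Fin n)) {J : Type*} [Fintype J]
    (ψ : L.Formula (Fin n ⊕ J)) (b : J → α) : IsOpen (SB (T := T) φ ψ b) := by
  rw [SB_eq_sheafBasic]
  exact TopologicalSpace.GenerateOpen.basic _ ⟨_, _, _, rfl⟩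

/-! ### Pattern formulas -/

/-- Finite conjunction of a list of formulas. -/
def listInf {ι : Type*} (l : List (L.Formula ι)) : L.Formula ι :=
  l.foldr (· ⊓ ·) ⊤

theorem sat_listInf {M : SmallModel L α T} {ι : Type*} {l : List (L.Formula ι)}
    {v : ι → M.carrier} : M.Sat (listInf l) v ↔ ∀ φ ∈ l, M.Sat φ v := by
  induction l with
  | nil => simpa [listInf] using M.sat_top
  | cons φ l ih =>
    simp only [listInf, List.foldr_cons, SmallModel.sat_inf, List.mem_cons] at *
    rw [ih]
    constructor
    · rintro ⟨h1, h2⟩ ψ (rfl | hψ)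
      · exact h1
      · exact h2 _ hψ
    · intro h
      exact ⟨h _ (Or.inl rfl), fun ψ hψ => h _ (Or.inr hψ)⟩

/-- The formula expressing that a tuple of variables has the same equality pattern as a
fixed tuple `d` of parameters. -/
noncomputable def patternF {ι : Type*} [Fintype ι] (d : ι → α) : L.Formula ι :=
  letI := Classical.decEq α
  listInf (((Finset.univ : Finset (ι × ι)).toList).map fun p =>
    if d p.1 = d p.2 then Term.equal (Term.var p.1) (Term.var p.2)
    else (Term.equal (L := L) (Term.var p.1) (Term.var p.2)).not)

theorem sat_patternF {M : SmallModel L α T} {ι : Type*} [Fintype ι] {d : ι → α}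
    {v : ι → M.carrier} :
    M.Sat (patternF d) v ↔ ∀ i j, (d i = d j ↔ (v i : α) = (v j : α)) := by
  letI := Classical.decEq α
  rw [patternF, sat_listInf]
  constructor
  · intro h i j
    have := h _ (List.mem_map.2 ⟨(i, j), by simp, rfl⟩)
    by_cases hd : d i = d j
    · rw [if_pos hd] at this
      rw [SmallModel.sat_equal] at this
      simp [hd, this]
    · rw [if_neg hd] at this
      rw [SmallModel.sat_not, SmallModel.sat_equal] at this
      constructor
      · intro h'; exact absurd h' hd
      · intro h'; exact absurd (Subtype.ext h') this
  · intro h ψ hψ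
    obtain ⟨⟨i, j⟩, -, rfl⟩ := List.mem_map.1 hψ
    by_cases hd : d i = d j
    · rw [if_pos hd, SmallModel.sat_equal]
      exact Subtype.ext ((h i j).1 hd)
    · rw [if_neg hd, SmallModel.sat_not, SmallModel.sat_equal]
      intro h'
      exact hd ((h i j).2 (congrArg Subtype.val h'))

/-! ### Extending equality patterns to permutations of `α` -/

theorem exists_perm_fin {N : ℕ} (d d' : Fin N → α)
    (h : ∀ i j, d i = d j ↔ d' i = d' j) :
    ∃ π : Equiv.Perm α, ∀ i, π (d i) = d' i := by
  letI := Classical.decEq α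
  induction N with
  | zero => exact ⟨1, fun i => i.elim0⟩
  | succ N ih =>
    obtain ⟨π, hπ⟩ := ih (d ∘ Fin.castSucc) (d' ∘ Fin.castSucc) fun i j => h _ _
    replace hπ : ∀ i : Fin N, π (d i.castSucc) = d' i.castSucc := fun i => hπ i
    by_cases hex : ∃ i : Fin N, d i.castSucc = d (Fin.last N)
    · obtain ⟨i₀, hi₀⟩ := hex
      refine ⟨π, fun i => ?_⟩
      refine Fin.lastCases ?_ (fun j => hπ j) i
      rw [← hi₀, hπ i₀]
      exact (h i₀.castSucc (Fin.last N)).1 hi₀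
    · refine ⟨π.trans (Equiv.swap (π (d (Fin.last N))) (d' (Fin.last N))), fun i => ?_⟩
      refine Fin.lastCases ?_ (fun j => ?_) i
      · simp [Equiv.swap_apply_left]
      · have h1 : d j.castSucc ≠ d (Fin.last N) := fun hc => hex ⟨j, hc⟩
        have h2 : d' j.castSucc ≠ d' (Fin.last N) := fun hc => h1 ((h _ _).2 hc)
        have h3 : π (d j.castSucc) ≠ π (d (Fin.last N)) := fun hc => h1 (π.injective hc)
        show Equiv.swap (π (d (Fin.last N))) (d' (Fin.last N)) (π (d j.castSucc)) = d' j.castSucc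
        rw [Equiv.swap_apply_of_ne_of_ne h3 (by rw [hπ j]; exact h2), hπ j]

theorem exists_perm {ι : Type*} [Fintype ι] (d d' : ι → α)
    (h : ∀ i j, d i = d j ↔ d' i = d' j) :
    ∃ π : Equiv.Perm α, ∀ i, π (d i) = d' i := by
  obtain ⟨π, hπ⟩ := exists_perm_fin (d ∘ (Fintype.equivFin ι).symm)
    (d' ∘ (Fintype.equivFin ι).symm) fun i j => h _ _
  exact ⟨π, fun i => by simpa using hπ (Fintype.equivFin ι i)⟩

/-! ### Transport of small models along permutations of `α` -/

/-- The bijection between `π ⁻¹' s` and `s` induced by `π`. -/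
def permEquivSet (π : Equiv.Perm α) (s : Set α) : ↥(π ⁻¹' s) ≃ ↥s :=
  (π : α ≃ α).subtypeEquiv fun _ => Iff.rfl

/-- Transport of a small model along a permutation of `α` (by taking preimages). -/
noncomputable def permModel (π : Equiv.Perm α) (N : SmallModel L α T) : SmallModel L α T where
  carrier := π ⁻¹' N.carrier
  struc := letI := N.struc; (permEquivSet π N.carrier).symm.inducedStructure
  models := by
    letI := N.struc
    letI : L.Structure (π ⁻¹' N.carrier) := (permEquivSet π N.carrier).symm.inducedStructure
    haveI := N.models
    exact StrongHomClass.theory_model ((permEquivSet π N.carrier).symm.inducedStructureEquiv)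

theorem mem_permModel {π : Equiv.Perm α} {N : SmallModel L α T} {x : α} :
    x ∈ (permModel π N).carrier ↔ π x ∈ N.carrier := Iff.rfl

/-- The isomorphism from the transported model to the original one. -/
noncomputable def permIso (π : Equiv.Perm α) (N : SmallModel L α T) :
    StrEquiv (permModel π N) N :=
  letI := N.struc
  letI : L.Structure ↥(π ⁻¹' N.carrier) := (permEquivSet π N.carrier).symm.inducedStructure
  ((permEquivSet π N.carrier).symm.inducedStructureEquiv).symm

theorem permIso_fn (π : Equiv.Perm α) (N : SmallModel L α T)
    (x : (permModel π N).carrier) : (StrEquiv.fn (permIso π N) x : α) = π x := rfl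

end AuxC


section AuxD

variable {T : L.Theory}

theorem StrEquiv.fn_coe {A B : SmallModel L α T} (f : StrEquiv A B) (x : A.carrier) :
    StrEquiv.fn f x = (letI := A.struc; letI := B.struc; f x) := rfl

theorem StrEquiv.fn_comp {A B C : SmallModel L α T} (g : StrEquiv B C) (f : StrEquiv A B)
    (x : A.carrier) : StrEquiv.fn (StrEquiv.comp g f) x = StrEquiv.fn g (StrEquiv.fn f x) :=
  rfl

theorem StrEquiv.fn_injective {A B : SmallModel L α T} (f : StrEquiv A B) :
    Function.Injective (StrEquiv.fn f) := by
  letI := A.struc; letI := B.struc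
  exact f.toEquiv.injective

/-- Symmetric structural equivalence. -/
def StrEquiv.symm {A B : SmallModel L α T} (f : StrEquiv A B) : StrEquiv B A :=
  letI := A.struc; letI := B.struc
  FirstOrder.Language.Equiv.symm f

theorem StrEquiv.fn_symm_fn {A B : SmallModel L α T} (f : StrEquiv A B) (x : A.carrier) :
    StrEquiv.fn (StrEquiv.symm f) (StrEquiv.fn f x) = x := by
  letI := A.struc; letI := B.struc
  exact f.toEquiv.symm_apply_apply x

theorem StrEquiv.fn_fn_symm {A B : SmallModel L α T} (f : StrEquiv A B) (x : B.carrier) :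
    StrEquiv.fn f (StrEquiv.fn (StrEquiv.symm f) x) = x := by
  letI := A.struc; letI := B.struc
  exact f.toEquiv.apply_symm_apply x

/-- All the data extracted from the sheaf `E` around the point `x₀`: a local section `σ`
of `E.r` defined on an open set `V`, a basic open `⟨Ψ, a⟩` around `M₀ = E.r x₀`, on which
the section is equivariant for isomorphisms fixing `a`. -/
structure WindowData (E : EquivSheaf.{u, v, w, x} L α T) (x₀ : E.R) where
  k : ℕ
  Ψ : L.Formula (Fin k)
  a : Fin k → α
  V : Set (SmallModel L α T)
  hVopen : IsOpen V
  σ : SmallModel L α T → E.R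
  hσcont : ContinuousOn σ V
  hσ : ∀ N ∈ V, E.r (σ N) = N
  hsub : XBasic (T := T) Ψ a ⊆ V
  M₀ : SmallModel L α T
  hM₀ : M₀ ∈ XBasic (T := T) Ψ a
  hx₀ : σ M₀ = x₀
  window : ∀ g : ModelIso L α T, g.src ∈ XBasic (T := T) Ψ a → g.tgt ∈ XBasic Ψ a →
    (∀ i, ∃ h : a i ∈ g.src.carrier, (StrEquiv.fn g.iso ⟨a i, h⟩ : α) = a i) →
    ∀ hc : E.r (σ g.src) = g.src,
    E.act ⟨(g, σ g.src), hc⟩ = σ g.tgt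

namespace WindowData

variable {E : EquivSheaf.{u, v, w, x} L α T} {x₀ : E.R} (W : WindowData E x₀)

/-- The defining formula of the definable sheaf covering `x₀`. -/
noncomputable def xi : L.Formula (Fin W.k) := W.Ψ ⊓ patternF W.a

theorem hcomp {A : SmallModel L α T} (hA : A ∈ XBasic (T := T) W.Ψ W.a) :
    E.r (W.σ A) = A := W.hσ A (W.hsub hA)

theorem sat_Psi (p : SheafPt (α := α) T W.xi) : p.model.Sat W.Ψ p.elem :=
  (SmallModel.sat_inf.mp p.sat).1

theorem sat_pattern (p : SheafPt (α := α) T W.xi) :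
    ∀ i j, (W.a i = W.a j ↔ (p.elem i : α) = (p.elem j : α)) := by
  have := (SmallModel.sat_inf.mp p.sat).2
  rwa [sat_patternF] at this

theorem exists_good (p : SheafPt (α := α) T W.xi) :
    ∃ (A : SmallModel L α T) (f : StrEquiv A p.model),
      A ∈ XBasic (T := T) W.Ψ W.a ∧
        ∀ i, ∃ h : W.a i ∈ A.carrier, (StrEquiv.fn f ⟨W.a i, h⟩ : α) = (p.elem i : α) := by
  obtain ⟨π, hπ⟩ := exists_perm W.a (fun i => (p.elem i : α)) (W.sat_pattern p)
  have hmem : ∀ i, W.a i ∈ (permModel π p.model).carrier := fun i => by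
    rw [mem_permModel, hπ i]; exact (p.elem i).2
  refine ⟨permModel π p.model, permIso π p.model, ⟨hmem, ?_⟩, fun i =>
    ⟨hmem i, by rw [permIso_fn]; exact hπ i⟩⟩
  rw [SmallModel.sat_iso (permIso π p.model)]
  refine (SmallModel.sat_congr (fun i => ?_)).mpr (W.sat_Psi p)
  rw [permIso_fn]; exact hπ i

/-- The source model of the chosen isomorphism for `p`. -/
noncomputable def goodA (p : SheafPt (α := α) T W.xi) : SmallModel L α T :=
  (W.exists_good p).choose

/-- The chosen isomorphism for `p`. -/
noncomputable def goodF (p : SheafPt (α := α) T W.xi) : StrEquiv (W.goodA p) p.model :=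
  (W.exists_good p).choose_spec.choose

theorem goodA_mem (p : SheafPt (α := α) T W.xi) :
    W.goodA p ∈ XBasic (T := T) W.Ψ W.a :=
  (W.exists_good p).choose_spec.choose_spec.1

theorem goodF_spec (p : SheafPt (α := α) T W.xi) :
    ∀ i, ∃ h : W.a i ∈ (W.goodA p).carrier,
      (StrEquiv.fn (W.goodF p) ⟨W.a i, h⟩ : α) = (p.elem i : α) :=
  (W.exists_good p).choose_spec.choose_spec.2

/-- The morphism of sheaves `⟦ξ⟧ → R`. -/
noncomputable def vmap (p : SheafPt (α := α) T W.xi) : E.R :=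
  E.act ⟨(⟨W.goodA p, p.model, W.goodF p⟩, W.σ (W.goodA p)), W.hcomp (W.goodA_mem p)⟩

theorem r_vmap (p : SheafPt (α := α) T W.xi) : E.r (W.vmap p) = p.model :=
  E.r_act _

/-- Key well-definedness lemma: the action applied to the section along any two
isomorphisms agreeing on `a` gives the same value. -/
theorem act_eq {A B N : SmallModel L α T} (f : StrEquiv A N) (g : StrEquiv B N)
    (hA : A ∈ XBasic (T := T) W.Ψ W.a) (hB : B ∈ XBasic (T := T) W.Ψ W.a)
    (hfg : ∀ i (h₁ : W.a i ∈ A.carrier) (h₂ : W.a i ∈ B.carrier),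
      (StrEquiv.fn f ⟨W.a i, h₁⟩ : α) = (StrEquiv.fn g ⟨W.a i, h₂⟩ : α))
    (hc₁ : E.r (W.σ A) = (⟨A, N, f⟩ : ModelIso L α T).src)
    (hc₂ : E.r (W.σ B) = (⟨B, N, g⟩ : ModelIso L α T).src) :
    E.act ⟨(⟨A, N, f⟩, W.σ A), hc₁⟩ = E.act ⟨(⟨B, N, g⟩, W.σ B), hc₂⟩ := by
  obtain ⟨haA, -⟩ := id hA
  obtain ⟨haB, -⟩ := id hB
  set h : StrEquiv A B := StrEquiv.comp (StrEquiv.symm g) f with hh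
  have hfix : ∀ i, ∃ hm : W.a i ∈ A.carrier,
      (StrEquiv.fn h ⟨W.a i, hm⟩ : α) = W.a i := by
    intro i
    refine ⟨haA i, ?_⟩
    have heq : StrEquiv.fn f ⟨W.a i, haA i⟩ = StrEquiv.fn g ⟨W.a i, haB i⟩ :=
      Subtype.ext (hfg i _ _)
    show (StrEquiv.fn (StrEquiv.symm g) (StrEquiv.fn f ⟨W.a i, haA i⟩) : α) = W.a i
    rw [heq, StrEquiv.fn_symm_fn]
  have hwin : E.act ⟨(⟨A, B, h⟩, W.σ A), W.hcomp hA⟩ = W.σ B :=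
    W.window ⟨A, B, h⟩ hA hB hfix (W.hcomp hA)
  have hcmp := E.act_comp A B N h g (W.σ A) (W.hcomp hA)
  have hgh : StrEquiv.comp g h = f := by
    letI := A.struc; letI := B.struc; letI := N.struc
    show FirstOrder.Language.Equiv.comp g
      (FirstOrder.Language.Equiv.comp (FirstOrder.Language.Equiv.symm g) f) = f
    rw [← FirstOrder.Language.Equiv.comp_assoc, FirstOrder.Language.Equiv.self_comp_symm,
      FirstOrder.Language.Equiv.refl_comp]
  have e1 : (⟨A, N, StrEquiv.comp g h⟩ : ModelIso L α T) = ⟨A, N, f⟩ := by rw [hgh]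
  calc E.act ⟨(⟨A, N, f⟩, W.σ A), hc₁⟩
      = E.act ⟨(⟨A, N, StrEquiv.comp g h⟩, W.σ A), W.hcomp hA⟩ :=
        congrArg E.act (Subtype.ext (show ((⟨A, N, f⟩ : ModelIso L α T), W.σ A) =
          ((⟨A, N, StrEquiv.comp g h⟩ : ModelIso L α T), W.σ A) by rw [hgh]))
    _ = E.act ⟨(⟨B, N, g⟩, E.act ⟨(⟨A, B, h⟩, W.σ A), W.hcomp hA⟩), E.r_act _⟩ := hcmp.symm
    _ = E.act ⟨(⟨B, N, g⟩, W.σ B), hc₂⟩ :=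
        congrArg E.act (Subtype.ext (show ((⟨B, N, g⟩ : ModelIso L α T),
          E.act ⟨(⟨A, B, h⟩, W.σ A), W.hcomp hA⟩) =
          ((⟨B, N, g⟩ : ModelIso L α T), W.σ B) by rw [hwin]))

theorem vmap_eq (p : SheafPt (α := α) T W.xi) {A : SmallModel L α T}
    (f : StrEquiv A p.model) (hA : A ∈ XBasic (T := T) W.Ψ W.a)
    (hf : ∀ i, ∃ h : W.a i ∈ A.carrier, (StrEquiv.fn f ⟨W.a i, h⟩ : α) = (p.elem i : α)) :
    W.vmap p = E.act ⟨(⟨A, p.model, f⟩, W.σ A), W.hcomp hA⟩ := by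
  apply W.act_eq (W.goodF p) f (W.goodA_mem p) hA
  intro i h₁ h₂
  obtain ⟨h₁', e₁⟩ := W.goodF_spec p i
  obtain ⟨h₂', e₂⟩ := hf i
  exact e₁.trans e₂.symm

theorem vmap_theta (q : ActionPt (α := α) T W.xi)
    (hc : E.r (W.vmap q.pt) = q.g.src) :
    W.vmap (theta W.xi q) = E.act ⟨(q.g, W.vmap q.pt), hc⟩ := by
  have hf : ∀ i, ∃ h : W.a i ∈ (W.goodA q.pt).carrier,
      (StrEquiv.fn (StrEquiv.comp q.g.iso (W.goodF q.pt)) ⟨W.a i, h⟩ : α)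
        = ((theta W.xi q).elem i : α) := by
    intro i
    obtain ⟨h', e'⟩ := W.goodF_spec q.pt i
    refine ⟨h', ?_⟩
    show (StrEquiv.fn q.g.iso (StrEquiv.fn (W.goodF q.pt) ⟨W.a i, h'⟩) : α) = _
    have : StrEquiv.fn (W.goodF q.pt) ⟨W.a i, h'⟩ = q.elem i := Subtype.ext e'
    exact congrArg (fun y => (StrEquiv.fn q.g.iso y : α)) this
  have h1 := W.vmap_eq (theta W.xi q) (StrEquiv.comp q.g.iso (W.goodF q.pt))
    (W.goodA_mem q.pt) hf
  rw [h1]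
  exact (E.act_comp (W.goodA q.pt) q.g.src q.g.tgt (W.goodF q.pt) q.g.iso
    (W.σ (W.goodA q.pt)) (W.hcomp (W.goodA_mem q.pt))).symm

/-- The canonical point of `⟦ξ⟧` over `M₀`. -/
noncomputable def pt₀ : SheafPt (α := α) T W.xi where
  model := W.M₀
  elem := fun i => ⟨W.a i, W.hM₀.choose i⟩
  sat := by
    refine SmallModel.sat_inf.mpr ⟨W.hM₀.choose_spec, ?_⟩
    rw [sat_patternF]
    exact fun i j => Iff.rfl

theorem vmap_pt₀ : W.vmap W.pt₀ = x₀ := by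
  have f : StrEquiv W.M₀ W.M₀ := letI := W.M₀.struc; FirstOrder.Language.Equiv.refl L _
  have h1 := W.vmap_eq W.pt₀
    (letI := W.M₀.struc; FirstOrder.Language.Equiv.refl L W.M₀.carrier)
    W.hM₀ (fun i => ⟨W.hM₀.choose i, rfl⟩)
  rw [h1]
  refine Eq.trans (Eq.trans (congrArg E.act (Subtype.ext ?_)) (E.act_id (W.σ W.M₀))) W.hx₀
  show ((⟨W.M₀, W.pt₀.model, letI := W.M₀.struc;
      FirstOrder.Language.Equiv.refl L W.M₀.carrier⟩ : ModelIso L α T), W.σ W.M₀) =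
    (ModelIso.idIso (E.r (W.σ W.M₀)), W.σ W.M₀)
  rw [W.hcomp W.hM₀]
  rfl

end WindowData

end AuxD


section AuxE

variable {T : L.Theory}

theorem exists_windowData (E : EquivSheaf.{u, v, w, x} L α T) (x₀ : E.R) :
    Nonempty (WindowData E x₀) := by
  classical
  obtain ⟨e, hx₀e, hre⟩ := E.isLocalHomeomorph_r x₀
  have hσ : ∀ N ∈ e.target, E.r (e.symm N) = N := fun N hN => by
    rw [hre]; exact e.right_inv hN
  have hσM₀ : e.symm (E.r x₀) = x₀ := by rw [hre]; exact e.left_inv hx₀e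
  have hM₀V : E.r x₀ ∈ e.target := by rw [hre]; exact e.map_source hx₀e
  have hq : E.r x₀ = (ModelIso.idIso (E.r x₀)).src := rfl
  have hx₀mem : E.act ⟨(ModelIso.idIso (E.r x₀), x₀), hq⟩ ∈ e.source := by
    have hid : E.act ⟨(ModelIso.idIso (E.r x₀), x₀), hq⟩ = x₀ := E.act_id x₀
    rw [hid]; exact hx₀e
  have hopen : IsOpen (E.act ⁻¹' e.source) := e.open_source.preimage E.continuous_act
  obtain ⟨P, hPopen, hPeq⟩ := isOpen_induced_iff.mp hopen
  have hmemP : ((ModelIso.idIso (E.r x₀), x₀) : ModelIso L α T × E.R) ∈ P := by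
    have : (⟨(ModelIso.idIso (E.r x₀), x₀), hq⟩ :
        {q : ModelIso L α T × E.R // E.r q.2 = q.1.src}) ∈ Subtype.val ⁻¹' P := by
      rw [hPeq]; exact hx₀mem
    exact this
  obtain ⟨W₁, U₁, hW₁, hU₁, hgW, hxU, hWU⟩ := isOpen_prod_iff.mp hPopen _ _ hmemP
  obtain ⟨tG, htG, hgmem, hgsub⟩ := exists_gbasic_subset_s15 hW₁ hgW
  obtain ⟨n₁, n₂, k₀, φ₁, bV, ψ₁, cV, sV, tV, rfl⟩ := htG
  have hQopen : IsOpen (e.target ∩ ⇑e.symm ⁻¹' U₁) :=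
    e.continuousOn_symm.isOpen_inter_preimage e.open_target hU₁
  have hM₀Q : E.r x₀ ∈ e.target ∩ ⇑e.symm ⁻¹' U₁ :=
    ⟨hM₀V, by rw [mem_preimage, hσM₀]; exact hxU⟩
  obtain ⟨tX, htX, hMχ, hχsub⟩ := exists_xbasic_subset_s15 hQopen hM₀Q
  obtain ⟨n₃, χ, dV, rfl⟩ := htX
  -- the pieces of the membership of the identity in the `G`-basic set
  obtain ⟨hsrc₁, htgt₁, hmap₁⟩ := mem_GB.mp hgmem
  have hst : ∀ i, tV i = sV i := by
    intro i
    obtain ⟨h, hh⟩ := hmap₁ i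
    exact hh.symm
  have hsmem : ∀ i, sV i ∈ (E.r x₀).carrier := fun i => (hmap₁ i).choose
  -- assemble the combined formula
  set F₁ : L.Formula (Fin n₁ ⊕ Fin n₂) := φ₁.relabel Sum.inl ⊓ ψ₁.relabel Sum.inr with hF₁
  set b₁ : Fin n₁ ⊕ Fin n₂ → α := Sum.elim bV cV with hb₁
  set F₂ : L.Formula (Fin n₃ ⊕ Fin k₀) :=
    χ.relabel Sum.inl ⊓ (⊤ : L.Formula (Fin k₀)).relabel Sum.inr with hF₂
  set b₂ : Fin n₃ ⊕ Fin k₀ → α := Sum.elim dV sV with hb₂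
  set F : L.Formula ((Fin n₁ ⊕ Fin n₂) ⊕ (Fin n₃ ⊕ Fin k₀)) :=
    F₁.relabel Sum.inl ⊓ F₂.relabel Sum.inr with hF
  set bb : (Fin n₁ ⊕ Fin n₂) ⊕ (Fin n₃ ⊕ Fin k₀) → α := Sum.elim b₁ b₂ with hbb
  have hXB : XB (T := T) F bb =
      (XB φ₁ bV ∩ XB ψ₁ cV) ∩ (XB χ dV ∩ XB (⊤ : L.Formula (Fin k₀)) sV) := by
    rw [XB_inter φ₁ bV ψ₁ cV, XB_inter χ dV (⊤ : L.Formula (Fin k₀)) sV,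
      XB_inter F₁ b₁ F₂ b₂]
  set eI := Fintype.equivFin ((Fin n₁ ⊕ Fin n₂) ⊕ (Fin n₃ ⊕ Fin k₀)) with heI
  refine ⟨⟨Fintype.card ((Fin n₁ ⊕ Fin n₂) ⊕ (Fin n₃ ⊕ Fin k₀)), F.relabel eI, bb ∘ eI.symm,
    e.target, e.open_target, ⇑e.symm, e.continuousOn_symm, hσ, ?_, E.r x₀, ?_, hσM₀, ?_⟩⟩
  · -- hsub
    rw [XBasic_eq_XB, XB_reindex eI F bb, hXB]
    intro M hM
    exact (hχsub hM.2.1).1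
  · -- M₀ ∈ XBasic
    rw [XBasic_eq_XB, XB_reindex eI F bb, hXB]
    exact ⟨⟨hsrc₁, htgt₁⟩, hMχ, ⟨hsmem, SmallModel.sat_top⟩⟩
  · -- window
    intro g hgsrc hgtgt hfix hc
    rw [XBasic_eq_XB, XB_reindex eI F bb, hXB] at hgsrc hgtgt
    have hsfix : ∀ i, ∃ h : sV i ∈ g.src.carrier,
        (StrEquiv.fn g.iso ⟨sV i, h⟩ : α) = tV i := by
      intro i
      have := hfix (eI (Sum.inr (Sum.inr i)))
      have ha : (bb ∘ eI.symm) (eI (Sum.inr (Sum.inr i))) = sV i := by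
        simp [hbb, hb₂]
      rw [ha] at this
      obtain ⟨h, hh⟩ := this
      exact ⟨h, by rw [hh, hst i]⟩
    have hgGB : g ∈ GB (T := T) φ₁ bV ψ₁ cV sV tV := ⟨hgsrc.1.1, hgtgt.1.2, hsfix⟩
    have hgP : (g, e.symm g.src) ∈ P :=
      hWU (mk_mem_prod (hgsub hgGB) (hχsub hgsrc.2.1).2)
    have hacts : E.act ⟨(g, e.symm g.src), hc⟩ ∈ e.source := by
      have hmem' : (⟨(g, e.symm g.src), hc⟩ :
          {q : ModelIso L α T × E.R // E.r q.2 = q.1.src}) ∈ Subtype.val ⁻¹' P := hgP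
      rw [hPeq] at hmem'
      exact hmem'
    have hract : E.r (E.act ⟨(g, e.symm g.src), hc⟩) = g.tgt := E.r_act _
    have hli := e.left_inv hacts
    rw [← hract]
    exact ((congrArg (⇑e.symm) (congrFun hre _)).trans hli).symm

end AuxE


section AuxF

variable {T : L.Theory}

theorem SmallModel.sat_iso_congr {A B : SmallModel L α T} (f : StrEquiv A B) {ι : Type*}
    {φ : L.Formula ι} {v : ι → A.carrier} {w : ι → B.carrier}
    (h : ∀ i, (StrEquiv.fn f (v i) : α) = (w i : α)) : A.Sat φ v ↔ B.Sat φ w :=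
  (SmallModel.sat_iso f φ v).trans (SmallModel.sat_congr h)

theorem StrEquiv.fn_coe_inj {A B : SmallModel L α T} (f : StrEquiv A B) {x y : A.carrier}
    (h : (StrEquiv.fn f x : α) = (StrEquiv.fn f y : α)) : (x : α) = (y : α) :=
  congrArg _ (StrEquiv.fn_injective f (Subtype.ext h))

namespace WindowData

variable {E : EquivSheaf.{u, v, w, x} L α T} {x₀ : E.R} (W : WindowData E x₀)

theorem mem_nhds_aux (p : SheafPt (α := α) T W.xi) {A : SmallModel L α T}
    (f : StrEquiv A p.model) (hA : A ∈ XBasic (T := T) W.Ψ W.a)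
    (hf : ∀ i, ∃ h : W.a i ∈ A.carrier, (StrEquiv.fn f ⟨W.a i, h⟩ : α) = (p.elem i : α))
    {O : Set E.R} (hO : IsOpen O)
    (hpO : E.act ⟨(⟨A, p.model, f⟩, W.σ A), W.hcomp hA⟩ ∈ O) :
    ∃ t, t ⊆ W.vmap ⁻¹' O ∧ IsOpen t ∧ p ∈ t := by
  classical
  obtain ⟨haA, -⟩ := id hA
  -- continuity of the action at the pair `((A, N, f), σ A)`
  have hopen : IsOpen (E.act ⁻¹' O) := hO.preimage E.continuous_act
  obtain ⟨P, hPopen, hPeq⟩ := isOpen_induced_iff.mp hopen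
  have hmemP : (((⟨A, p.model, f⟩ : ModelIso L α T), W.σ A) : ModelIso L α T × E.R) ∈ P := by
    have : (⟨(⟨A, p.model, f⟩, W.σ A), W.hcomp hA⟩ :
        {q : ModelIso L α T × E.R // E.r q.2 = q.1.src}) ∈ Subtype.val ⁻¹' P := by
      rw [hPeq]; exact hpO
    exact this
  obtain ⟨W₂, O₂, hW₂, hO₂, hgW₂, hσO₂, hsub₂⟩ := isOpen_prod_iff.mp hPopen _ _ hmemP
  obtain ⟨tG, htG, hgmem, hgsub⟩ := exists_gbasic_subset_s15 hW₂ hgW₂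
  obtain ⟨m₁, m₂, l, φ', uV, ψ', wV, sV, tV, rfl⟩ := htG
  have hQopen : IsOpen (W.V ∩ W.σ ⁻¹' O₂) :=
    W.hσcont.isOpen_inter_preimage W.hVopen hO₂
  have hAQ : A ∈ W.V ∩ W.σ ⁻¹' O₂ := ⟨W.hsub hA, hσO₂⟩
  obtain ⟨tX, htX, hAχ, hχsub⟩ := exists_xbasic_subset_s15 hQopen hAQ
  obtain ⟨m₃, χ, eV, rfl⟩ := htX
  obtain ⟨heVA, hχA⟩ := id hAχ
  obtain ⟨huVA, hφ'A⟩ := (mem_GB.mp hgmem).1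
  obtain ⟨hwVN, hψ'N⟩ := (mem_GB.mp hgmem).2.1
  have hmapst := (mem_GB.mp hgmem).2.2
  -- index types and tuples
  -- `J'` indexes the parameters living in `A`, `J` additionally the ones in `N`.
  -- `P'` is the index for the pattern formula.
  let DC : Fin W.k ⊕ (Fin m₃ ⊕ (Fin m₁ ⊕ Fin l)) → A.carrier := Sum.elim (fun i => ⟨W.a i, haA i⟩)
    (Sum.elim (fun i => ⟨eV i, heVA i⟩)
      (Sum.elim (fun i => ⟨uV i, huVA i⟩) (fun i => ⟨sV i, (hmapst i).choose⟩)))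
  let DA : Fin W.k ⊕ (Fin m₃ ⊕ (Fin m₁ ⊕ Fin l)) → α := fun i => (DC i : α)
  let bJ : (Fin m₃ ⊕ (Fin m₁ ⊕ Fin l)) ⊕ Fin m₂ → α :=
    Sum.elim (fun j => (StrEquiv.fn f (DC (Sum.inr j)) : α)) wV
  -- the formula and the basic open set
  let jE : Fin m₃ → Fin W.k ⊕ ((Fin m₃ ⊕ (Fin m₁ ⊕ Fin l)) ⊕ Fin m₂) :=
    fun i => Sum.inr (Sum.inl (Sum.inl i))
  let jU : Fin m₁ → Fin W.k ⊕ ((Fin m₃ ⊕ (Fin m₁ ⊕ Fin l)) ⊕ Fin m₂) :=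
    fun i => Sum.inr (Sum.inl (Sum.inr (Sum.inl i)))
  let jW : Fin m₂ → Fin W.k ⊕ ((Fin m₃ ⊕ (Fin m₁ ⊕ Fin l)) ⊕ Fin m₂) :=
    fun i => Sum.inr (Sum.inr i)
  let ιP : Fin W.k ⊕ (Fin m₃ ⊕ (Fin m₁ ⊕ Fin l)) →
      Fin W.k ⊕ ((Fin m₃ ⊕ (Fin m₁ ⊕ Fin l)) ⊕ Fin m₂) := Sum.map id Sum.inl
  refine ⟨SB W.xi
    (χ.relabel jE ⊓ (φ'.relabel jU ⊓ (ψ'.relabel jW ⊓ (patternF DA).relabel ιP))) bJ,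
    ?_, isOpen_SB _ _ _, ?_⟩
  · -- the basic open set is mapped into `O`
    rintro p' ⟨hb', hsat'⟩
    simp only [SmallModel.sat_inf, SmallModel.sat_relabel] at hsat'
    obtain ⟨hχ', hφ'', hψ'', hpat'⟩ := hsat'
    rw [sat_patternF] at hpat'
    -- a permutation matching the parameters in `A` with the new parameters
    obtain ⟨π, hπ⟩ := exists_perm DA
      (fun i => ((Sum.elim p'.elem (fun j => ⟨bJ j, hb' j⟩) ∘ ιP) i : α)) hpat'
    set A' := permModel π p'.model with hA'def
    set g' := permIso π p'.model with hg'def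
    have hmemA' : ∀ i : Fin W.k ⊕ (Fin m₃ ⊕ (Fin m₁ ⊕ Fin l)), DA i ∈ A'.carrier := by
      intro i
      rw [mem_permModel, hπ i]
      exact ((Sum.elim p'.elem (fun j => ⟨bJ j, hb' j⟩) ∘ ιP) i).2
    have hπa : ∀ i, π (W.a i) = (p'.elem i : α) := fun i => hπ (Sum.inl i)
    have hπe : ∀ i, π (eV i) = bJ (Sum.inl (Sum.inl i)) := fun i => hπ (Sum.inr (Sum.inl i))
    have hπu : ∀ i, π (uV i) = bJ (Sum.inl (Sum.inr (Sum.inl i))) := fun i =>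
      hπ (Sum.inr (Sum.inr (Sum.inl i)))
    have hπs : ∀ i, π (sV i) = bJ (Sum.inl (Sum.inr (Sum.inr i))) := fun i =>
      hπ (Sum.inr (Sum.inr (Sum.inr i)))
    have hg'A : A' ∈ XBasic (T := T) W.Ψ W.a := by
      refine ⟨fun i => hmemA' (Sum.inl i), ?_⟩
      refine (SmallModel.sat_iso_congr g' (w := p'.elem) fun i => ?_).mpr (W.sat_Psi p')
      rw [permIso_fn]; exact hπa i
    have hf' : ∀ i, ∃ h : W.a i ∈ A'.carrier,
        (StrEquiv.fn g' ⟨W.a i, h⟩ : α) = (p'.elem i : α) := fun i =>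
      ⟨hmemA' (Sum.inl i), by rw [permIso_fn]; exact hπa i⟩
    have hveq := W.vmap_eq p' g' hg'A hf'
    rw [mem_preimage, hveq]
    -- the new pair lies in the window `W₂ ×ˢ O₂`
    have hA'χ : A' ∈ XBasic (T := T) χ eV := by
      refine ⟨fun i => hmemA' (Sum.inr (Sum.inl i)), ?_⟩
      refine (SmallModel.sat_iso_congr g'
        (w := fun i => ⟨bJ (Sum.inl (Sum.inl i)), hb' _⟩) fun i => ?_).mpr hχ'
      rw [permIso_fn]; exact hπe i
    have hgGB : (⟨A', p'.model, g'⟩ : ModelIso L α T) ∈ GB (T := T) φ' uV ψ' wV sV tV := by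
      refine ⟨⟨fun i => hmemA' (Sum.inr (Sum.inr (Sum.inl i))), ?_⟩,
        ⟨fun i => hb' (Sum.inr i), ?_⟩, fun i => ⟨hmemA' (Sum.inr (Sum.inr (Sum.inr i))), ?_⟩⟩
      · refine (SmallModel.sat_iso_congr g'
          (w := fun i => ⟨bJ (Sum.inl (Sum.inr (Sum.inl i))), hb' _⟩) fun i => ?_).mpr hφ''
        rw [permIso_fn]; exact hπu i
      · exact hψ''
      · rw [permIso_fn, hπs i]
        exact (hmapst i).choose_spec
    have hσA'O₂ : W.σ A' ∈ O₂ := (hχsub hA'χ).2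
    have hmemP' : ((⟨A', p'.model, g'⟩ : ModelIso L α T), W.σ A') ∈ P :=
      hsub₂ (mk_mem_prod (hgsub hgGB) hσA'O₂)
    have : (⟨(⟨A', p'.model, g'⟩, W.σ A'), W.hcomp hg'A⟩ :
        {q : ModelIso L α T × E.R // E.r q.2 = q.1.src}) ∈ Subtype.val ⁻¹' P := hmemP'
    rw [hPeq] at this
    exact this
  · -- `p` itself lies in the basic open set
    have hbmem : ∀ j : (Fin m₃ ⊕ (Fin m₁ ⊕ Fin l)) ⊕ Fin m₂, bJ j ∈ p.model.carrier := by
      rintro (j | j)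
      · exact (StrEquiv.fn f (DC (Sum.inr j))).2
      · exact hwVN j
    refine ⟨hbmem, ?_⟩
    simp only [SmallModel.sat_inf, SmallModel.sat_relabel]
    have hcoe : ∀ i : Fin W.k ⊕ (Fin m₃ ⊕ (Fin m₁ ⊕ Fin l)),
        ((Sum.elim p.elem (fun j => (⟨bJ j, hbmem j⟩ : p.model.carrier)) ∘ ιP) i : α) =
          (StrEquiv.fn f (DC i) : α) := by
      rintro (i | j)
      · exact ((hf i).choose_spec).symm
      · rfl
    refine ⟨?_, ?_, ?_, ?_⟩
    · exact (SmallModel.sat_iso_congr f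
        (v := fun i => ⟨eV i, heVA i⟩) (fun i => (hcoe (Sum.inr (Sum.inl i))).symm)).mp hχA
    · exact (SmallModel.sat_iso_congr f
        (v := fun i => ⟨uV i, huVA i⟩)
        (fun i => (hcoe (Sum.inr (Sum.inr (Sum.inl i)))).symm)).mp hφ'A
    · exact hψ'N
    · rw [sat_patternF]
      intro i j
      have key : DA i = DA j ↔ (StrEquiv.fn f (DC i) : α) = (StrEquiv.fn f (DC j) : α) :=
        ⟨fun h => congrArg _ (congrArg (StrEquiv.fn f) (Subtype.ext h)),
          fun h => StrEquiv.fn_coe_inj f h⟩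
      rwa [← hcoe i, ← hcoe j] at key

theorem vmap_continuous : Continuous W.vmap := by
  rw [continuous_def]
  intro O hO
  rw [isOpen_iff_forall_mem_open]
  intro p hp
  exact W.mem_nhds_aux p (W.goodF p) (W.goodA_mem p) (W.goodF_spec p) hO hp

end WindowData

end AuxF


/-- **The definable equivariant sheaves generate**: for any equivariant sheaf
`(r : R → X_T, ρ)` on `G_T ⇉ X_T` and any `x₀ ∈ R`, there is a formula `ξ` and a
continuous equivariant map `v̂ : ⟦ξ⟧ → R` over `X_T` with `x₀` in its image. -/
theorem definable_sheaves_generate {T : L.Theory} (E : EquivSheaf.{u, v, w, x} L α T)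
    (x₀ : E.R) :
    ∃ (n : ℕ) (ξ : L.Formula (Fin n)) (v : SheafPt (α := α) T ξ → E.R)
      (hsec : ∀ p : SheafPt (α := α) T ξ, E.r (v p) = p.model),
      Continuous v ∧ (∃ p, v p = x₀) ∧
      ∀ q : ActionPt (α := α) T ξ,
        v (theta ξ q) = E.act ⟨(q.g, v q.pt), hsec q.pt⟩ := by
  obtain ⟨W⟩ := exists_windowData E x₀
  exact ⟨W.k, W.xi, W.vmap, W.r_vmap, W.vmap_continuous, ⟨W.pt₀, W.vmap_pt₀⟩,
    fun q => W.vmap_theta q (W.r_vmap q.pt)⟩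
end
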